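/- Let d_2, ..., d_n be pairwise coprime square-free natural numbers ≥ 2, and for each j let m_j ≥ 3, k_j ≥ 1 be naturals with m_j² - d_j k_j² = 4. Then the real numbers t_j := log((m_j + √(m_j² - 4))/2) satisfy Hypothesis 1: whenever ε_j ∈ {-1,0,1} and Σ_j ε_j t_j = 0, all ε_j vanish. -/

import Mathlib

open Real

/-- The subalgebra of ℝ generated over ℚ by the square roots of the entries of `L`. -/
noncomputable def sqrtAdj (L : List ℕ) : Subalgebra ℚ ℝ :=
  Algebra.adjoin ℚ ((fun a : ℕ => Real.sqrt a) '' {x | x ∈ L})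

lemma sqrt_mem_sqrtAdj {L : List ℕ} {a : ℕ} (h : a ∈ L) : Real.sqrt a ∈ sqrtAdj L :=
  Algebra.subset_adjoin ⟨a, h, rfl⟩

lemma natCast_mem_sqrtAdj (L : List ℕ) (a : ℕ) : ((a : ℝ)) ∈ sqrtAdj L :=
  Subalgebra.natCast_mem (sqrtAdj L) a

lemma sqrtAdj_cons_decomp {a : ℕ} {L : List ℕ} {x : ℝ} (hx : x ∈ sqrtAdj (a :: L)) :
    ∃ u ∈ sqrtAdj L, ∃ v ∈ sqrtAdj L, x = u + v * Real.sqrt a := by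
  have hsa : Real.sqrt a * Real.sqrt a = (a : ℝ) :=
    Real.mul_self_sqrt (by positivity)
  have haF : ((a : ℝ)) ∈ sqrtAdj L := natCast_mem_sqrtAdj L a
  refine Algebra.adjoin_induction (p := fun x _ => ∃ u ∈ sqrtAdj L, ∃ v ∈ sqrtAdj L,
      x = u + v * Real.sqrt a) ?_ ?_ ?_ ?_ hx
  · rintro y ⟨b, hb, rfl⟩
    rcases List.mem_cons.mp hb with rfl | hbL
    · exact ⟨0, zero_mem _, 1, one_mem _, by ring⟩
    · exact ⟨Real.sqrt b, sqrt_mem_sqrtAdj hbL, 0, zero_mem _, by ring⟩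
  · intro r
    exact ⟨algebraMap ℚ ℝ r, algebraMap_mem _ r, 0, zero_mem _, by ring⟩
  · rintro x y _ _ ⟨u, hu, v, hv, rfl⟩ ⟨u', hu', v', hv', rfl⟩
    exact ⟨u + u', add_mem hu hu', v + v', add_mem hv hv', by ring⟩
  · rintro x y _ _ ⟨u, hu, v, hv, rfl⟩ ⟨u', hu', v', hv', rfl⟩
    refine ⟨u * u' + (v * v') * a, ?_, u * v' + v * u', ?_, ?_⟩
    · exact add_mem (mul_mem hu hu') (mul_mem (mul_mem hv hv') haF)
    · exact add_mem (mul_mem hu hv') (mul_mem hv hu')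
    · linear_combination (v * v') * hsa

/-- Key lemma: if `N` is squarefree, `≥ 2`, and coprime to the pairwise-coprime
squarefree entries of `L` (each `≥ 2`), then no nonzero multiple `c·√N` with
`c ∈ sqrtAdj L` lies in `sqrtAdj L`. -/
lemma sqrt_not_in_sqrtAdj : ∀ (L : List ℕ), (∀ a ∈ L, Squarefree a) → (∀ a ∈ L, 2 ≤ a) →
    L.Pairwise Nat.Coprime →
    ∀ N : ℕ, Squarefree N → 2 ≤ N → (∀ a ∈ L, Nat.Coprime N a) →
    ∀ c ∈ sqrtAdj L, c ≠ 0 → c * Real.sqrt N ∉ sqrtAdj L := by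
  intro L
  induction L with
  | nil =>
    intro _ _ _ N hNsq hN2 _ c hc hc0 hb
    have hirr : Irrational (Real.sqrt N) := by
      rw [irrational_sqrt_natCast_iff]
      rintro ⟨r, rfl⟩
      have h := Nat.isUnit_iff.mp (hNsq r (dvd_refl _))
      subst h; omega
    have hbot : sqrtAdj ([] : List ℕ) = ⊥ := by
      simp [sqrtAdj, Algebra.adjoin_empty]
    rw [hbot, Algebra.mem_bot] at hc hb
    obtain ⟨q, rfl⟩ := hc
    obtain ⟨p, hp⟩ := hb
    simp only [eq_ratCast] at hp hc0
    have hq : (q : ℝ) ≠ 0 := hc0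
    refine hirr ⟨p / q, ?_⟩
    push_cast
    field_simp
    rw [mul_comm] at hp
    linarith [hp]
  | cons a L ih =>
    intro hsq hge hpair N hNsq hN2 hNcop c hc hc0 hb
    have hsqL : ∀ b ∈ L, Squarefree b := fun b hb => hsq b (List.mem_cons_of_mem _ hb)
    have hgeL : ∀ b ∈ L, 2 ≤ b := fun b hb => hge b (List.mem_cons_of_mem _ hb)
    have hpairL : L.Pairwise Nat.Coprime := (List.pairwise_cons.mp hpair).2
    have hacop : ∀ b ∈ L, Nat.Coprime a b := (List.pairwise_cons.mp hpair).1
    have hNcopL : ∀ b ∈ L, Nat.Coprime N b := fun b hb => hNcop b (List.mem_cons_of_mem _ hb)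
    have hNa : Nat.Coprime N a := hNcop a (List.mem_cons_self)
    have ihL := ih hsqL hgeL hpairL
    have iha := ihL a (hsq a (List.mem_cons_self)) (hge a (List.mem_cons_self)) hacop
    have ihN := ihL N hNsq hN2 hNcopL
    have ihNa : ∀ c ∈ sqrtAdj L, c ≠ 0 → c * Real.sqrt ((N : ℝ) * (a : ℝ)) ∉ sqrtAdj L := by
      have h := ihL (N * a) ((Nat.squarefree_mul hNa).mpr ⟨hNsq, hsq a (List.mem_cons_self)⟩)
        (by have := hge a (List.mem_cons_self); nlinarith)
        (fun b hb => Nat.Coprime.mul (hNcopL b hb) (hacop b hb))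
      rwa [Nat.cast_mul] at h
    have hsa : Real.sqrt a * Real.sqrt a = (a : ℝ) := Real.mul_self_sqrt (by positivity)
    have hsN : Real.sqrt N * Real.sqrt N = (N : ℝ) := Real.mul_self_sqrt (by positivity)
    have hsNa : Real.sqrt N * Real.sqrt a = Real.sqrt ((N : ℝ) * (a : ℝ)) :=
      (Real.sqrt_mul (by positivity) _).symm
    set sa := Real.sqrt (a : ℕ) with hsa_def
    set sN := Real.sqrt (N : ℕ) with hsN_def
    obtain ⟨c₀, hc₀, c₁, hc₁, hcdec⟩ := sqrtAdj_cons_decomp hc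
    obtain ⟨b₀, hb₀, b₁, hb₁, hbdec⟩ := sqrtAdj_cons_decomp hb
    have haF : ((a : ℝ)) ∈ sqrtAdj L := natCast_mem_sqrtAdj L a
    have hNF : ((N : ℝ)) ∈ sqrtAdj L := natCast_mem_sqrtAdj L N
    have heq : (c₀ + c₁ * sa) * sN = b₀ + b₁ * sa := by rw [← hcdec, ← hbdec]
    set C := c₀ ^ 2 - c₁ ^ 2 * (a : ℝ) with hC_def
    set B₀ := c₀ * b₀ - c₁ * b₁ * (a : ℝ) with hB₀_def
    set B₁ := c₀ * b₁ - c₁ * b₀ with hB₁_def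
    have hCF : C ∈ sqrtAdj L := sub_mem (pow_mem hc₀ 2) (mul_mem (pow_mem hc₁ 2) haF)
    have hB₀F : B₀ ∈ sqrtAdj L := sub_mem (mul_mem hc₀ hb₀) (mul_mem (mul_mem hc₁ hb₁) haF)
    have hB₁F : B₁ ∈ sqrtAdj L := sub_mem (mul_mem hc₀ hb₁) (mul_mem hc₁ hb₀)
    have hCeq : C * sN = B₀ + B₁ * sa := by
      rw [hC_def, hB₀_def, hB₁_def]
      linear_combination (c₀ - c₁ * sa) * heq + (c₁ ^ 2 * sN - c₁ * b₁) * hsa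
    have hCne : C ≠ 0 := by
      intro hC0
      rw [hC_def] at hC0
      rcases eq_or_ne c₁ 0 with h1 | h1
      · have h2 : c₀ = 0 := by
          have : c₀ ^ 2 = 0 := by rw [h1] at hC0; linarith [hC0]
          exact pow_eq_zero_iff (two_ne_zero) |>.mp this
        exact hc0 (by rw [hcdec, h1, h2]; ring)
      · have hsq' : (c₁ * sa) ^ 2 = c₀ ^ 2 := by linear_combination c₁ ^ 2 * hsa - hC0
        rcases sq_eq_sq_iff_eq_or_eq_neg.mp hsq' with h | h
        · exact iha c₁ hc₁ h1 (h ▸ hc₀)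
        · exact iha c₁ hc₁ h1 (h ▸ neg_mem hc₀)
    have hsqeq : (2 * B₀ * B₁) * sa = C ^ 2 * (N : ℝ) - B₀ ^ 2 - B₁ ^ 2 * (a : ℝ) := by
      linear_combination (-(C * sN + B₀ + B₁ * sa)) * hCeq + C ^ 2 * hsN - B₁ ^ 2 * hsa
    rcases eq_or_ne B₁ 0 with hB1 | hB1
    · refine ihN C hCF hCne ?_
      have h : C * sN = B₀ := by rw [hCeq, hB1]; ring
      rw [h]; exact hB₀F
    · rcases eq_or_ne B₀ 0 with hB0 | hB0
      · refine ihNa C hCF hCne ?_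
        have h : C * Real.sqrt ((N : ℝ) * (a : ℝ)) = B₁ * (a : ℝ) := by
          rw [← hsNa]
          linear_combination sa * hCeq + B₁ * hsa + sa * hB0
        rw [h]; exact mul_mem hB₁F haF
      · refine iha (2 * B₀ * B₁)
          (mul_mem (mul_mem (by exact_mod_cast natCast_mem_sqrtAdj L 2) hB₀F) hB₁F)
          (by simp [hB0, hB1]) ?_
        rw [hsqeq]
        exact sub_mem (sub_mem (mul_mem (pow_mem hCF 2) hNF) (pow_mem hB₀F 2))
          (mul_mem (pow_mem hB₁F 2) haF)

/-- Hypothesis 1: the only vanishing `{-1,0,1}`-combination of `b_2, …, b_n` is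
the trivial one. -/
def Hyp1 (n : ℕ) (b : ℕ → ℝ) : Prop :=
  ∀ ε : ℕ → ℝ, (∀ j, ε j = -1 ∨ ε j = 0 ∨ ε j = 1) →
    (∑ j ∈ Finset.Icc 2 n, ε j * b j) = 0 → ∀ j ∈ Finset.Icc 2 n, ε j = 0

/-- With `d_j` pairwise coprime square-free naturals `≥ 2` and `(m_j, k_j)`
nontrivial solutions of `m² - d k² = 4`, the numbers
`t_j = log((m_j + √(m_j²-4))/2)` satisfy Hypothesis 1. -/
theorem pell_logs_satisfy_hyp1 (n : ℕ) (d m k : ℕ → ℕ)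
    (hcop : ∀ i ∈ Finset.Icc 2 n, ∀ j ∈ Finset.Icc 2 n, i ≠ j → Nat.Coprime (d i) (d j))
    (hsq : ∀ j ∈ Finset.Icc 2 n, Squarefree (d j))
    (hd : ∀ j ∈ Finset.Icc 2 n, 2 ≤ d j)
    (hm : ∀ j ∈ Finset.Icc 2 n, 3 ≤ m j)
    (hk : ∀ j ∈ Finset.Icc 2 n, 1 ≤ k j)
    (hpell : ∀ j ∈ Finset.Icc 2 n, (m j) ^ 2 = d j * (k j) ^ 2 + 4) :
    Hyp1 n (fun j => Real.log (((m j : ℝ) + Real.sqrt ((m j : ℝ) ^ 2 - 4)) / 2)) := by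
  intro ε hε hsum i hi
  by_contra hεi
  set S := Finset.Icc 2 n with hS
  -- the fundamental units and their conjugates
  set α : ℕ → ℝ := fun j => ((m j : ℝ) + (k j : ℝ) * Real.sqrt (d j)) / 2 with hα
  set β : ℕ → ℝ := fun j => ((m j : ℝ) - (k j : ℝ) * Real.sqrt (d j)) / 2 with hβ
  have hpellR : ∀ j ∈ S, ((m j : ℝ)) ^ 2 = (d j : ℝ) * (k j : ℝ) ^ 2 + 4 := by
    intro j hj
    exact_mod_cast congrArg (fun x : ℕ => (x : ℝ)) (hpell j hj)
  have hsqrt : ∀ j ∈ S, Real.sqrt ((m j : ℝ) ^ 2 - 4) = (k j : ℝ) * Real.sqrt (d j) := by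
    intro j hj
    have h : ((m j : ℝ)) ^ 2 - 4 = (d j : ℝ) * (k j : ℝ) ^ 2 := by
      linarith [hpellR j hj]
    rw [h, Real.sqrt_mul (by positivity), Real.sqrt_sq (by positivity)]
    ring
  have hαpos : ∀ j ∈ S, 0 < α j := by
    intro j hj
    have h3 : (3 : ℝ) ≤ (m j : ℝ) := by exact_mod_cast hm j hj
    have h0 := Real.sqrt_nonneg ((d j : ℕ) : ℝ)
    have hk0 : (0 : ℝ) ≤ (k j : ℝ) := by positivity
    rw [hα]
    dsimp only
    nlinarith
  have hαβ : ∀ j ∈ S, α j * β j = 1 := by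
    intro j hj
    have hdd : Real.sqrt (d j) * Real.sqrt (d j) = (d j : ℝ) :=
      Real.mul_self_sqrt (by positivity)
    rw [hα, hβ]
    dsimp only
    linear_combination (1 / 4) * hpellR j hj - ((k j : ℝ) ^ 2 / 4) * hdd
  have hsum' : ∑ j ∈ S, ε j * Real.log (α j) = 0 := by
    have h : ∀ j ∈ S, ε j * Real.log (α j)
        = ε j * Real.log (((m j : ℝ) + Real.sqrt ((m j : ℝ) ^ 2 - 4)) / 2) := by
      intro j hj
      rw [hsqrt j hj]
    rw [Finset.sum_congr rfl h]
    exact hsum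
  have hprod : ∏ j ∈ S, Real.exp (ε j * Real.log (α j)) = 1 := by
    rw [← Real.exp_sum, hsum', Real.exp_zero]
  -- the list of d-values away from i
  set L : List ℕ := ((S.erase i).toList).map d with hL
  have hjS : ∀ j ∈ S.erase i, j ∈ S := fun j hj => Finset.mem_of_mem_erase hj
  have hdL : ∀ j ∈ S.erase i, d j ∈ L := by
    intro j hj
    exact List.mem_map.mpr ⟨j, Finset.mem_toList.mpr hj, rfl⟩
  have hLmem : ∀ a ∈ L, ∃ j ∈ S.erase i, d j = a := by
    intro a ha
    obtain ⟨j, hj, rfl⟩ := List.mem_map.mp ha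
    exact ⟨j, Finset.mem_toList.mp hj, rfl⟩
  have hαmem : ∀ j ∈ S.erase i, α j ∈ sqrtAdj L := by
    intro j hj
    have hs := sqrt_mem_sqrtAdj (hdL j hj)
    have h : α j = ((1 : ℚ) / 2) • ((m j : ℝ) + (k j : ℝ) * Real.sqrt (d j)) := by
      rw [Rat.smul_def]; push_cast; rw [hα]; ring
    rw [h]
    exact Subalgebra.smul_mem _
      (add_mem (natCast_mem_sqrtAdj _ _) (mul_mem (natCast_mem_sqrtAdj _ _) hs)) _
  have hβmem : ∀ j ∈ S.erase i, β j ∈ sqrtAdj L := by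
    intro j hj
    have hs := sqrt_mem_sqrtAdj (hdL j hj)
    have h : β j = ((1 : ℚ) / 2) • ((m j : ℝ) - (k j : ℝ) * Real.sqrt (d j)) := by
      rw [Rat.smul_def]; push_cast; rw [hβ]; ring
    rw [h]
    exact Subalgebra.smul_mem _
      (sub_mem (natCast_mem_sqrtAdj _ _) (mul_mem (natCast_mem_sqrtAdj _ _) hs)) _
  have hfmem : ∀ j ∈ S.erase i, Real.exp (ε j * Real.log (α j)) ∈ sqrtAdj L := by
    intro j hj
    rcases hε j with h | h | h
    · rw [h, neg_one_mul, Real.exp_neg, Real.exp_log (hαpos j (hjS j hj))]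
      rw [inv_eq_of_mul_eq_one_left ?_]
      · exact hβmem j hj
      · rw [mul_comm]; exact hαβ j (hjS j hj)
    · rw [h, zero_mul, Real.exp_zero]; exact one_mem _
    · rw [h, one_mul, Real.exp_log (hαpos j (hjS j hj))]; exact hαmem j hj
  set P : ℝ := ∏ j ∈ S.erase i, Real.exp (ε j * Real.log (α j)) with hP
  have hPmem : P ∈ sqrtAdj L := Subalgebra.prod_mem _ hfmem
  have hPpos : 0 < P := Finset.prod_pos fun j _ => Real.exp_pos _
  have hmain : Real.exp (ε i * Real.log (α i)) * P = 1 :=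
    (Finset.mul_prod_erase S _ hi).trans hprod
  -- conditions of the key lemma
  have hsqa : ∀ a ∈ L, Squarefree a := by
    intro a ha; obtain ⟨j, hj, rfl⟩ := hLmem a ha; exact hsq j (hjS j hj)
  have hgea : ∀ a ∈ L, 2 ≤ a := by
    intro a ha; obtain ⟨j, hj, rfl⟩ := hLmem a ha; exact hd j (hjS j hj)
  have hpairL : L.Pairwise Nat.Coprime := by
    rw [hL, List.pairwise_map]
    have hnd : (S.erase i).toList.Pairwise (· ≠ ·) := Finset.nodup_toList _
    refine List.Pairwise.imp_of_mem ?_ hnd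
    intro a b ha hb hne
    exact hcop a (hjS a (Finset.mem_toList.mp ha)) b (hjS b (Finset.mem_toList.mp hb)) hne
  have hcopL : ∀ a ∈ L, Nat.Coprime (d i) a := by
    intro a ha; obtain ⟨j, hj, rfl⟩ := hLmem a ha
    exact hcop i hi j (hjS j hj) (Finset.ne_of_mem_erase hj).symm
  have hkey := sqrt_not_in_sqrtAdj L hsqa hgea hpairL (d i) (hsq i hi) (hd i hi) hcopL
  have hki : (0 : ℝ) < (k i : ℝ) := by exact_mod_cast hk i hi
  have h2mem : (2 : ℝ) - (m i : ℝ) * P ∈ sqrtAdj L := by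
    refine sub_mem ?_ (mul_mem (natCast_mem_sqrtAdj _ _) hPmem)
    exact_mod_cast natCast_mem_sqrtAdj L 2
  rcases hε i with h | h | h
  · -- ε i = -1 : β i * P = 1
    have hE : β i * P = 1 := by
      rw [← hmain, h, neg_one_mul, Real.exp_neg, Real.exp_log (hαpos i hi),
        inv_eq_of_mul_eq_one_left (by rw [mul_comm]; exact hαβ i hi)]
    refine hkey (-((k i : ℝ) * P)) (neg_mem (mul_mem (natCast_mem_sqrtAdj _ _) hPmem))
      (by nlinarith) ?_
    have h' : (-((k i : ℝ) * P)) * Real.sqrt (d i) = 2 - (m i : ℝ) * P := by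
      rw [hβ] at hE
      dsimp only at hE
      linear_combination (2 : ℝ) * hE
    rw [h']
    exact h2mem
  · exact hεi h
  · -- ε i = 1 : α i * P = 1
    have hE : α i * P = 1 := by
      rw [← hmain, h, one_mul, Real.exp_log (hαpos i hi)]
    refine hkey ((k i : ℝ) * P) (mul_mem (natCast_mem_sqrtAdj _ _) hPmem)
      (by nlinarith) ?_
    have h' : ((k i : ℝ) * P) * Real.sqrt (d i) = 2 - (m i : ℝ) * P := by
      rw [hα] at hE
      dsimp only at hE
      linear_combination (2 : ℝ) * hE
    rw [h']
    exact h2mem
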